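/- arXiv:1705.09249 — 5 statements merged into one kernel-verified Lean document; each statement's English description precedes it below -/
import Mathlib

section
/- Let X ∈ ℝ^{n×p} and D ∈ ℝ^{m×p} be real matrices with ker(X) ∩ ker(D) = {0}, and for ν > 0 set A(ν) = (ν/n)·XᵀX + DᵀD (a symmetric positive definite matrix). Let S ⊆ {1,…,m} with s = |S| < m and let D_{S^c} ∈ ℝ^{(m−s)×p} be the submatrix of D consisting of the rows indexed by the complement of S. Define θ(ν) = arccos √( trace(D_{S^c} A(ν)⁻¹ D_{S^c}ᵀ) / (m−s) ). Then lim_{ν→+∞} θ(ν) = π/2 if and only if the column space of D_{S^c}ᵀ is contained in the column space of Xᵀ. -/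
open Matrix Real Filter

private lemma psd_dot {p : ℕ} {B : Matrix (Fin p) (Fin p) ℝ} (hB : B.PosSemidef)
    (x : Fin p → ℝ) : 0 ≤ x ⬝ᵥ B *ᵥ x := by
  simpa using hB.dotProduct_mulVec_nonneg x

private lemma arccos_anti : Antitone Real.arccos := by
  intro a b h
  simp only [Real.arccos]
  exact sub_le_sub_left (Real.monotone_arcsin h) _

/-- Cauchy-Schwarz for a positive definite matrix and its inverse. -/
private lemma cs_posdef {p : ℕ} {B : Matrix (Fin p) (Fin p) ℝ} (hB : B.PosDef)
    (u r : Fin p → ℝ) :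
    (u ⬝ᵥ r) ^ 2 ≤ (u ⬝ᵥ B *ᵥ u) * (r ⬝ᵥ B⁻¹ *ᵥ r) := by
  classical
  set y := B⁻¹ *ᵥ r with hy
  have hdet : IsUnit B.det := hB.det_pos.ne'.isUnit
  have hBy : B *ᵥ y = r := by
    rw [hy, mulVec_mulVec, Matrix.mul_nonsing_inv _ hdet, one_mulVec]
  have hBT : Bᵀ = B := hB.isHermitian
  have hsymm : ∀ a b : Fin p → ℝ, a ⬝ᵥ B *ᵥ b = b ⬝ᵥ B *ᵥ a := by
    intro a b
    rw [dotProduct_mulVec, ← hBT, vecMul_transpose, hBT, dotProduct_comm]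
  have hry : r ⬝ᵥ B⁻¹ *ᵥ r = y ⬝ᵥ B *ᵥ y := by
    rw [hBy, ← hy, dotProduct_comm]
  have hquad : ∀ t : ℝ, 0 ≤ (y ⬝ᵥ B *ᵥ y) * (t * t) + (2 * (u ⬝ᵥ r)) * t + u ⬝ᵥ B *ᵥ u := by
    intro t
    have h0 := psd_dot hB.posSemidef (u + t • y)
    have hexp : (u + t • y) ⬝ᵥ B *ᵥ (u + t • y)
        = (y ⬝ᵥ B *ᵥ y) * (t * t) + (2 * (u ⬝ᵥ r)) * t + u ⬝ᵥ B *ᵥ u := by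
      have h1 : u ⬝ᵥ B *ᵥ y = u ⬝ᵥ r := by rw [hBy]
      have h2 : y ⬝ᵥ B *ᵥ u = u ⬝ᵥ r := by rw [hsymm, hBy]
      rw [mulVec_add, dotProduct_add, add_dotProduct, add_dotProduct,
        mulVec_smul, dotProduct_smul, smul_dotProduct, smul_dotProduct,
        dotProduct_smul, h1, h2]
      simp [smul_eq_mul]
      ring
    linarith [hexp ▸ h0]
  have hd := discrim_le_zero hquad
  rw [discrim] at hd
  rw [hry]
  nlinarith [hd]

section Aux
variable {n p m : ℕ}

/-- The quadratic form of `A ν`. -/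
private lemma quad_eq (X : Matrix (Fin n) (Fin p) ℝ) (D : Matrix (Fin m) (Fin p) ℝ)
    (ν : ℝ) (x : Fin p → ℝ) :
    x ⬝ᵥ ((ν / n) • (Xᵀ * X) + Dᵀ * D) *ᵥ x
      = (ν / n) * ((X *ᵥ x) ⬝ᵥ (X *ᵥ x)) + (D *ᵥ x) ⬝ᵥ (D *ᵥ x) := by
  rw [add_mulVec, dotProduct_add, smul_mulVec, dotProduct_smul, smul_eq_mul,
    ← mulVec_mulVec, ← mulVec_mulVec, dotProduct_mulVec, vecMul_transpose,
    dotProduct_mulVec x Dᵀ, vecMul_transpose]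

private lemma A_posdef (X : Matrix (Fin n) (Fin p) ℝ) (D : Matrix (Fin m) (Fin p) ℝ)
    (hker : LinearMap.ker X.mulVecLin ⊓ LinearMap.ker D.mulVecLin = ⊥)
    {ν : ℝ} (hν : 0 < ν) :
    ((ν / n) • (Xᵀ * X) + Dᵀ * D).PosDef := by
  rw [Matrix.posDef_iff_dotProduct_mulVec]
  constructor
  · have h1 : ((Xᵀ * X) : Matrix (Fin p) (Fin p) ℝ).IsHermitian := by
      simpa using Matrix.isHermitian_conjTranspose_mul_self X
    have h2 : ((Dᵀ * D) : Matrix (Fin p) (Fin p) ℝ).IsHermitian := by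
      simpa using Matrix.isHermitian_conjTranspose_mul_self D
    have h1' : ((ν / n) • (Xᵀ * X) : Matrix (Fin p) (Fin p) ℝ).IsHermitian := by
      rw [Matrix.IsHermitian, Matrix.conjTranspose_smul, h1.eq, star_trivial]
    exact h1'.add h2
  · intro x hx
    have hq := quad_eq X D ν x
    simp only [star_trivial]
    rw [hq]
    have hXx : 0 ≤ (X *ᵥ x) ⬝ᵥ (X *ᵥ x) := Finset.sum_nonneg fun i _ => mul_self_nonneg _
    have hDx : 0 ≤ (D *ᵥ x) ⬝ᵥ (D *ᵥ x) := Finset.sum_nonneg fun i _ => mul_self_nonneg _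
    have hc : 0 ≤ ν / n := div_nonneg hν.le (Nat.cast_nonneg n)
    by_cases hD0 : D *ᵥ x = 0
    · have hX0 : X *ᵥ x ≠ 0 := by
        intro hX0
        apply hx
        have : x ∈ LinearMap.ker X.mulVecLin ⊓ LinearMap.ker D.mulVecLin :=
          ⟨by simpa [LinearMap.mem_ker] using hX0, by simpa [LinearMap.mem_ker] using hD0⟩
        simpa [hker] using this
      have hn : 0 < n := by
        rcases Nat.eq_zero_or_pos n with h | h
        · exfalso; apply hX0; subst h; exact funext fun i => absurd i.2 (by omega)
        · exact h
      have hXpos : 0 < (X *ᵥ x) ⬝ᵥ (X *ᵥ x) :=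
        lt_of_le_of_ne hXx (fun h => hX0 (dotProduct_self_eq_zero.mp h.symm))
      have hcpos : 0 < ν / n := div_pos hν (by exact_mod_cast hn)
      nlinarith
    · have hDpos : 0 < (D *ᵥ x) ⬝ᵥ (D *ᵥ x) :=
        lt_of_le_of_ne hDx (fun h => hD0 (dotProduct_self_eq_zero.mp h.symm))
      nlinarith



private lemma key_le {n p m : ℕ} (X : Matrix (Fin n) (Fin p) ℝ) (D : Matrix (Fin m) (Fin p) ℝ)
    {ν : ℝ} (hν : 0 < ν)
    (hpd : (((ν / n) • (Xᵀ * X) + Dᵀ * D) : Matrix (Fin p) (Fin p) ℝ).PosDef)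
    (v : Fin n → ℝ) :
    (Xᵀ *ᵥ v) ⬝ᵥ ((ν / n) • (Xᵀ * X) + Dᵀ * D)⁻¹ *ᵥ (Xᵀ *ᵥ v)
      ≤ ((n : ℝ) / ν) * (v ⬝ᵥ v) := by
  classical
  set B : Matrix (Fin p) (Fin p) ℝ := (ν / n) • (Xᵀ * X) + Dᵀ * D with hB
  set x : Fin p → ℝ := Xᵀ *ᵥ v with hx
  set y : Fin p → ℝ := B⁻¹ *ᵥ x with hy
  set q : ℝ := x ⬝ᵥ B⁻¹ *ᵥ x with hq
  have hq0 : 0 ≤ q := psd_dot hpd.inv.posSemidef x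
  have hdet : IsUnit B.det := hpd.det_pos.ne'.isUnit
  have hBy : B *ᵥ y = x := by rw [hy, mulVec_mulVec, Matrix.mul_nonsing_inv _ hdet, one_mulVec]
  have hyBy : y ⬝ᵥ B *ᵥ y = q := by rw [hBy, hq, hy, dotProduct_comm]
  have hquad := quad_eq X D ν y
  have hDy : 0 ≤ (D *ᵥ y) ⬝ᵥ (D *ᵥ y) := Finset.sum_nonneg fun i _ => mul_self_nonneg _
  have hXyle : (ν / n) * ((X *ᵥ y) ⬝ᵥ (X *ᵥ y)) ≤ q := by
    rw [← hyBy, ← hB] at *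
    rw [hquad] at hyBy
    linarith
  have hqX : q = v ⬝ᵥ (X *ᵥ y) := by
    rw [hq, ← hy, dotProduct_comm, hx, dotProduct_mulVec, vecMul_transpose, dotProduct_comm]
  have hvv : 0 ≤ v ⬝ᵥ v := Finset.sum_nonneg fun i _ => mul_self_nonneg _
  have hcs : q ^ 2 ≤ (v ⬝ᵥ v) * ((X *ᵥ y) ⬝ᵥ (X *ᵥ y)) := by
    have h := Finset.sum_mul_sq_le_sq_mul_sq Finset.univ v (X *ᵥ y)
    simp only [pow_two] at h ⊢
    rw [hqX]
    simpa [dotProduct, pow_two] using h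
  rcases Nat.eq_zero_or_pos n with hn | hn
  · subst hn
    have hXy0 : (X *ᵥ y) ⬝ᵥ (X *ᵥ y) = 0 := by simp [dotProduct]
    have : q ^ 2 ≤ 0 := by rw [hXy0] at hcs; linarith [hcs]
    have hq' : q = 0 := by nlinarith
    rw [hq'] ; positivity
  · have hnr : (0:ℝ) < n := by exact_mod_cast hn
    have hfrac : 0 < ν / n := div_pos hν hnr
    have hXy2 : (X *ᵥ y) ⬝ᵥ (X *ᵥ y) ≤ (n / ν) * q := by
      have h1 : ((X *ᵥ y) ⬝ᵥ (X *ᵥ y)) * (ν / n) ≤ q := by rw [mul_comm]; exact hXyle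
      have h2 : (X *ᵥ y) ⬝ᵥ (X *ᵥ y) ≤ q / (ν / n) := (le_div_iff₀ hfrac).mpr h1
      calc (X *ᵥ y) ⬝ᵥ (X *ᵥ y) ≤ q / (ν / n) := h2
        _ = ((n : ℝ) / ν) * q := by field_simp
    have hK : 0 ≤ ((n:ℝ) / ν) * (v ⬝ᵥ v) := by positivity
    nlinarith [hcs, hXy2, hq0, hvv, mul_le_mul_of_nonneg_left hXy2 hvv]

private lemma trace_form {ι : Type*} [Fintype ι] {p : ℕ} (M : Matrix ι (Fin p) ℝ)
    (B : Matrix (Fin p) (Fin p) ℝ) :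
    (M * B * Mᵀ).trace = ∑ i, (M i) ⬝ᵥ B *ᵥ (M i) := by
  simp only [Matrix.trace, Matrix.diag, Matrix.mul_apply, Matrix.transpose_apply,
    Matrix.mulVec, dotProduct, Finset.mul_sum, Finset.sum_mul]
  refine Finset.sum_congr rfl fun i _ => ?_
  rw [Finset.sum_comm]
  refine Finset.sum_congr rfl fun j _ => Finset.sum_congr rfl fun k _ => by ring

end Aux

/-- **Theorem 1 (linear model) of GSplit LBI.**
For `A(ν) = (ν/n)·XᵀX + DᵀD` (positive definite since `ker X ∩ ker D = {0}`) and
`θ(ν) = arccos √(trace(D_{Sᶜ} A(ν)⁻¹ D_{Sᶜ}ᵀ)/(m−s))`, one has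
`lim_{ν→∞} θ(ν) = π/2` iff `Im(D_{Sᶜ}ᵀ) ⊆ Im(Xᵀ)`. -/
theorem gsplit_lbi_angle_limit_iff {n p m : ℕ}
    (X : Matrix (Fin n) (Fin p) ℝ) (D : Matrix (Fin m) (Fin p) ℝ)
    (hker : LinearMap.ker X.mulVecLin ⊓ LinearMap.ker D.mulVecLin = ⊥)
    (S : Finset (Fin m)) (hS : S.card < m)
    (A : ℝ → Matrix (Fin p) (Fin p) ℝ)
    (hA : ∀ ν : ℝ, A ν = (ν / n) • (Xᵀ * X) + Dᵀ * D)
    (Dsc : Matrix {i : Fin m // i ∉ S} (Fin p) ℝ)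
    (hDsc : Dsc = D.submatrix (fun i : {i : Fin m // i ∉ S} => (i : Fin m)) id)
    (θ : ℝ → ℝ)
    (hθ : ∀ ν : ℝ, θ ν = Real.arccos (Real.sqrt
      ((Dsc * (A ν)⁻¹ * Dscᵀ).trace / ((m : ℝ) - S.card)))) :
    Tendsto θ atTop (nhds (Real.pi / 2)) ↔
      LinearMap.range (Dscᵀ).mulVecLin ≤ LinearMap.range (Xᵀ).mulVecLin := by
  classical
  have hm : (0:ℝ) < (m:ℝ) - S.card := by
    have : (S.card : ℝ) < m := by exact_mod_cast hS
    linarith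
  set Mc : ℝ := (m:ℝ) - S.card with hMc
  have hApd : ∀ {ν : ℝ}, 0 < ν → (A ν).PosDef := by
    intro ν hν; rw [hA]; exact A_posdef X D hker hν
  set T : ℝ → ℝ := fun ν => (Dsc * (A ν)⁻¹ * Dscᵀ).trace with hTdef
  have hTsum : ∀ ν : ℝ, T ν = ∑ i, (Dsc i) ⬝ᵥ (A ν)⁻¹ *ᵥ (Dsc i) :=
    fun ν => trace_form Dsc (A ν)⁻¹
  have hT0 : ∀ {ν : ℝ}, 0 < ν → 0 ≤ T ν := by
    intro ν hν
    rw [hTsum]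
    exact Finset.sum_nonneg fun i _ => psd_dot (hApd hν).inv.posSemidef _
  constructor
  · -- θ → π/2  ⇒  range inclusion
    intro htend
    by_contra hnot
    have hrow : ∃ i, Dsc i ∉ LinearMap.range (Xᵀ).mulVecLin := by
      by_contra h'
      push_neg at h'
      apply hnot
      rw [Matrix.range_mulVecLin, Submodule.span_le]
      rintro _ ⟨i, rfl⟩
      exact h' i
    obtain ⟨i0, hi0⟩ := hrow
    obtain ⟨f, hfr, hfmap⟩ :=
      Submodule.exists_dual_map_eq_bot_of_notMem hi0 inferInstance
    set u : Fin p → ℝ := fun j => f (Pi.single j 1) with hu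
    have hfu : ∀ x : Fin p → ℝ, f x = u ⬝ᵥ x := by
      intro x
      have hxsum : (∑ j, x j • (Pi.single j (1:ℝ) : Fin p → ℝ)) = x := by
        funext k
        simp [Pi.single_apply, Finset.sum_ite_eq]
      calc f x = f (∑ j, x j • (Pi.single j (1:ℝ) : Fin p → ℝ)) := by rw [hxsum]
        _ = ∑ j, x j * f (Pi.single j (1:ℝ)) := by rw [map_sum]; simp [_root_.map_smul]
        _ = u ⬝ᵥ x := by simp [dotProduct, hu, mul_comm]
    have hvanish : ∀ w : Fin n → ℝ, f (Xᵀ *ᵥ w) = 0 := by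
      intro w
      have hmem : Xᵀ *ᵥ w ∈ LinearMap.range (Xᵀ).mulVecLin := ⟨w, rfl⟩
      have : f (Xᵀ *ᵥ w) ∈ (LinearMap.range (Xᵀ).mulVecLin).map f :=
        Submodule.mem_map_of_mem hmem
      rw [hfmap] at this
      exact (Submodule.mem_bot ℝ).mp this
    have hXu : X *ᵥ u = 0 := by
      have h1 : u ⬝ᵥ (Xᵀ *ᵥ (X *ᵥ u)) = 0 := by
        rw [← hfu]; exact hvanish (X *ᵥ u)
      rw [dotProduct_mulVec, vecMul_transpose] at h1
      exact dotProduct_self_eq_zero.mp h1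
    have hur : u ⬝ᵥ Dsc i0 ≠ 0 := by rw [← hfu]; exact hfr
    have hu0 : u ≠ 0 := by
      intro h; apply hur; rw [h]; simp
    have hDu : D *ᵥ u ≠ 0 := by
      intro hD0
      apply hu0
      have : u ∈ LinearMap.ker X.mulVecLin ⊓ LinearMap.ker D.mulVecLin :=
        ⟨by simpa [LinearMap.mem_ker] using hXu, by simpa [LinearMap.mem_ker] using hD0⟩
      simpa [hker] using this
    set dd : ℝ := (D *ᵥ u) ⬝ᵥ (D *ᵥ u) with hdd_def
    have hdd : 0 < dd := by
      have h0 : 0 ≤ dd := Finset.sum_nonneg fun i _ => mul_self_nonneg _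
      rcases h0.lt_or_eq with h | h
      · exact h
      · exact absurd (dotProduct_self_eq_zero.mp h.symm) hDu
    set c0 : ℝ := (u ⬝ᵥ Dsc i0) ^ 2 / dd with hc0_def
    have hc0 : 0 < c0 := by
      apply div_pos _ hdd
      exact lt_of_le_of_ne (sq_nonneg _) (Ne.symm (pow_ne_zero 2 hur))
    have hlow : ∀ {ν : ℝ}, 0 < ν → c0 ≤ T ν := by
      intro ν hν
      have hpd := hApd hν
      have hcs := cs_posdef hpd u (Dsc i0)
      have huAu : u ⬝ᵥ (A ν) *ᵥ u = dd := by
        rw [hA, quad_eq, hXu]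
        simp [dotProduct, hdd_def]
      have hdiag : c0 ≤ (Dsc i0) ⬝ᵥ (A ν)⁻¹ *ᵥ (Dsc i0) := by
        rw [hc0_def, div_le_iff₀ hdd]
        rw [huAu] at hcs
        calc (u ⬝ᵥ Dsc i0) ^ 2 ≤ dd * (Dsc i0 ⬝ᵥ (A ν)⁻¹ *ᵥ Dsc i0) := hcs
          _ = (Dsc i0 ⬝ᵥ (A ν)⁻¹ *ᵥ Dsc i0) * dd := mul_comm _ _
      rw [hTsum]
      calc c0 ≤ (Dsc i0) ⬝ᵥ (A ν)⁻¹ *ᵥ (Dsc i0) := hdiag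
        _ ≤ ∑ i, (Dsc i) ⬝ᵥ (A ν)⁻¹ *ᵥ (Dsc i) :=
            Finset.single_le_sum (fun j _ => psd_dot hpd.inv.posSemidef _)
              (Finset.mem_univ i0)
    set θ₀ : ℝ := Real.arccos (Real.sqrt (c0 / Mc)) with hθ₀
    have hθ₀lt : θ₀ < Real.pi / 2 :=
      Real.arccos_lt_pi_div_two.mpr (Real.sqrt_pos.mpr (div_pos hc0 hm))
    have hbound : ∀ {ν : ℝ}, 0 < ν → θ ν ≤ θ₀ := by
      intro ν hν
      rw [hθ]
      apply arccos_anti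
      apply Real.sqrt_le_sqrt
      exact (div_le_div_iff_of_pos_right hm).mpr (hlow hν)
    have hev1 : ∀ᶠ ν in atTop, θ₀ < θ ν := htend.eventually (eventually_gt_nhds hθ₀lt)
    obtain ⟨ν, h1, h2⟩ := (hev1.and (eventually_gt_atTop 0)).exists
    exact absurd (hbound h2) (not_le.mpr h1)
  · -- range inclusion ⇒ θ → π/2
    intro hle
    have hrows : ∀ i, ∃ w : Fin n → ℝ, Xᵀ *ᵥ w = Dsc i := by
      intro i
      have hmem : Dsc i ∈ LinearMap.range (Dscᵀ).mulVecLin :=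
        ⟨Pi.single i 1, by simp [Matrix.mulVecLin_apply, Matrix.mulVec_single_one]; rfl⟩
      obtain ⟨w, hw⟩ := hle hmem
      exact ⟨w, hw⟩
    choose w hw using hrows
    set C : ℝ := ∑ i, (w i) ⬝ᵥ (w i) with hCdef
    have hC0 : 0 ≤ C :=
      Finset.sum_nonneg fun i _ => Finset.sum_nonneg fun j _ => mul_self_nonneg _
    have hupper : ∀ {ν : ℝ}, 0 < ν → T ν ≤ ((n : ℝ) * C) / ν := by
      intro ν hν
      rw [hTsum]
      have hterm : ∀ i, (Dsc i) ⬝ᵥ (A ν)⁻¹ *ᵥ (Dsc i)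
          ≤ ((n : ℝ) / ν) * ((w i) ⬝ᵥ (w i)) := by
        intro i
        have hpd : (((ν / n) • (Xᵀ * X) + Dᵀ * D) : Matrix (Fin p) (Fin p) ℝ).PosDef :=
          A_posdef X D hker hν
        have h := key_le X D hν hpd (w i)
        rw [hw i] at h
        rw [hA]
        exact h
      calc (∑ i, (Dsc i) ⬝ᵥ (A ν)⁻¹ *ᵥ (Dsc i))
          ≤ ∑ i, ((n : ℝ) / ν) * ((w i) ⬝ᵥ (w i)) :=
            Finset.sum_le_sum fun i _ => hterm i
        _ = ((n : ℝ) * C) / ν := by rw [← Finset.mul_sum, ← hCdef]; ring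
    have hTto : Tendsto T atTop (nhds 0) := by
      refine tendsto_of_tendsto_of_tendsto_of_le_of_le' tendsto_const_nhds
        (Tendsto.div_atTop (tendsto_const_nhds (x := (n : ℝ) * C)) tendsto_id) ?_ ?_
      · exact (eventually_gt_atTop 0).mono fun ν hν => hT0 hν
      · exact (eventually_gt_atTop 0).mono fun ν hν => hupper hν
    have h1 : Tendsto (fun ν => T ν / Mc) atTop (nhds 0) := by
      simpa using hTto.div_const Mc
    have h2 : Tendsto (fun ν => Real.sqrt (T ν / Mc)) atTop (nhds 0) := by
      have h := (Real.continuous_sqrt.tendsto 0).comp h1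
      simpa [Function.comp_def] using h
    have h3 := (Real.continuous_arccos.tendsto 0).comp h2
    rw [Real.arccos_zero] at h3
    have hfun : θ = fun ν => Real.arccos (Real.sqrt (T ν / Mc)) := funext fun ν => hθ ν
    rw [hfun]
    exact h3
end

section
/- Let X ∈ ℝ^{n×p} with rows x₁ᵀ,…,xₙᵀ, let β ∈ ℝ^p be fixed, and let W(β) ∈ ℝ^{n×n} be the diagonal matrix with i-th diagonal entry exp(xᵢᵀβ)/(1+exp(xᵢᵀβ))². Let D ∈ ℝ^{m×p} with ker(X) ∩ ker(D) = {0}, and for ν > 0 set A_W(ν) = (ν/n)·XᵀW(β)X + DᵀD (a symmetric positive definite matrix). Let S ⊆ {1,…,m} with s = |S| < m and D_{S^c} the submatrix of rows of D outside S. Define θ(ν) = arccos √( trace(D_{S^c} A_W(ν)⁻¹ D_{S^c}ᵀ) / (m−s) ). Then lim_{ν→+∞} θ(ν) = π/2 if and only if the column space of D_{S^c}ᵀ is contained in the column space of Xᵀ. -/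
open Matrix Real Filter

lemma dot_mulVec_comm {k l : Type*} [Fintype k] [Fintype l]
    (M : Matrix k l ℝ) (a : k → ℝ) (b : l → ℝ) :
    a ⬝ᵥ (M *ᵥ b) = (Mᵀ *ᵥ a) ⬝ᵥ b := by
  rw [Matrix.dotProduct_mulVec, ← Matrix.mulVec_transpose]

lemma sym_form_comm {k : Type*} [Fintype k] {M : Matrix k k ℝ} (hsym : Mᵀ = M)
    (a b : k → ℝ) : a ⬝ᵥ (M *ᵥ b) = b ⬝ᵥ (M *ᵥ a) := by
  rw [dot_mulVec_comm, hsym, dotProduct_comm]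

/-- Cauchy–Schwarz for a PSD quadratic form given by a symmetric matrix. -/
lemma psd_cauchy_schwarz {k : Type*} [Fintype k] {M : Matrix k k ℝ} (hsym : Mᵀ = M)
    (hpsd : ∀ v, 0 ≤ v ⬝ᵥ (M *ᵥ v)) (a b : k → ℝ) :
    (a ⬝ᵥ (M *ᵥ b)) ^ 2 ≤ (a ⬝ᵥ (M *ᵥ a)) * (b ⬝ᵥ (M *ᵥ b)) := by
  have key : ∀ x : ℝ, 0 ≤ (b ⬝ᵥ (M *ᵥ b)) * (x * x) + (2 * (a ⬝ᵥ (M *ᵥ b))) * x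
      + (a ⬝ᵥ (M *ᵥ a)) := by
    intro x
    have h := hpsd (a + x • b)
    have hb : b ⬝ᵥ (M *ᵥ a) = a ⬝ᵥ (M *ᵥ b) := sym_form_comm hsym b a
    simp only [Matrix.mulVec_add, Matrix.mulVec_smul, dotProduct_add, add_dotProduct,
      smul_dotProduct, dotProduct_smul, smul_eq_mul] at h
    rw [hb] at h
    linarith [h]
  have := discrim_le_zero key
  rw [discrim] at this
  nlinarith [this]

/-- A symmetric real matrix whose kernel is dot-orthogonal to `d` has `d` in its range. -/
lemma mem_range_of_dot_ker_zero {k : Type*} [Fintype k] [DecidableEq k]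
    {G : Matrix k k ℝ} (hsym : Gᵀ = G)
    {d : k → ℝ} (h : ∀ z, G *ᵥ z = 0 → d ⬝ᵥ z = 0) :
    d ∈ LinearMap.range G.mulVecLin := by
  set Rg := LinearMap.range G.mulVecLin with hRg
  set K := LinearMap.ker G.mulVecLin with hK
  have hdisj : Rg ⊓ K = ⊥ := by
    rw [Submodule.eq_bot_iff]
    rintro x ⟨hx1, hx2⟩
    obtain ⟨w, hw⟩ := hx1
    have hx0 : G *ᵥ x = 0 := hx2
    simp only [Matrix.mulVecLin_apply] at hw
    have : x ⬝ᵥ x = 0 := by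
      nth_rewrite 1 [← hw]
      rw [dotProduct_comm, sym_form_comm hsym x w, hx0, dotProduct_zero]
    exact dotProduct_self_eq_zero.mp this
  have htop : Rg ⊔ K = ⊤ := by
    apply Submodule.eq_top_of_finrank_eq
    have h1 := Submodule.finrank_sup_add_finrank_inf_eq Rg K
    rw [hdisj] at h1
    simp only [finrank_bot, add_zero] at h1
    rw [h1]
    exact LinearMap.finrank_range_add_finrank_ker G.mulVecLin
  have hd : d ∈ Rg ⊔ K := htop ▸ Submodule.mem_top
  obtain ⟨r, hr, z, hz, hrz⟩ := Submodule.mem_sup.mp hd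
  have hz0 : G *ᵥ z = 0 := hz
  have hdz : d ⬝ᵥ z = 0 := h z hz0
  obtain ⟨w, hw⟩ := hr
  simp only [Matrix.mulVecLin_apply] at hw
  have hrz0 : r ⬝ᵥ z = 0 := by
    rw [← hw, dotProduct_comm, sym_form_comm hsym z w, hz0, dotProduct_zero]
  have hzz : z ⬝ᵥ z = 0 := by
    have : d ⬝ᵥ z = r ⬝ᵥ z + z ⬝ᵥ z := by rw [← hrz, add_dotProduct]
    rw [hdz, hrz0] at this
    linarith
  have : z = 0 := dotProduct_self_eq_zero.mp hzz
  rw [← hrz, this, add_zero]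
  exact ⟨w, by simpa using hw⟩

/-- The range of `Xᵀ X` equals the range of `Xᵀ`. -/
lemma range_transpose_mul_self {n p : ℕ} (X : Matrix (Fin n) (Fin p) ℝ) :
    LinearMap.range (Xᵀ * X).mulVecLin = LinearMap.range (Xᵀ).mulVecLin := by
  apply Submodule.eq_of_le_of_finrank_le
  · rw [Matrix.mulVecLin_mul]
    exact LinearMap.range_comp_le_range _ _
  · show Xᵀ.rank ≤ (Xᵀ * X).rank
    rw [Matrix.rank_transpose_mul_self, Matrix.rank_transpose]

/-- If `d` is not in the range of `Xᵀ`, there is `z` in the kernel of `X`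
with `d ⬝ᵥ z ≠ 0`. -/
lemma exists_ker_not_orth {n p : ℕ} (X : Matrix (Fin n) (Fin p) ℝ) {d : Fin p → ℝ}
    (hd : d ∉ LinearMap.range (Xᵀ).mulVecLin) :
    ∃ z, X *ᵥ z = 0 ∧ d ⬝ᵥ z ≠ 0 := by
  by_contra hcon
  push_neg at hcon
  apply hd
  rw [← range_transpose_mul_self]
  apply mem_range_of_dot_ker_zero (by rw [Matrix.transpose_mul, Matrix.transpose_transpose])
  intro z hz
  apply hcon
  -- (Xᵀ X) z = 0 → X z = 0
  have hker := Matrix.ker_mulVecLin_transpose_mul_self X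
  have h2 : z ∈ LinearMap.ker (Xᵀ * X).mulVecLin := hz
  rw [hker] at h2
  exact h2


set_option maxHeartbeats 2000000 in
/-- **Theorem 1 (logit model) of GSplit LBI.**
With `W(β)` the diagonal matrix of logistic weights `exp(xᵢᵀβ)/(1+exp(xᵢᵀβ))²` and
`A_W(ν) = (ν/n)·XᵀW(β)X + DᵀD`, the angle
`θ(ν) = arccos √(trace(D_{Sᶜ} A_W(ν)⁻¹ D_{Sᶜ}ᵀ)/(m−s))` tends to `π/2` as `ν → ∞`
iff `Im(D_{Sᶜ}ᵀ) ⊆ Im(Xᵀ)`. -/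
theorem gsplit_lbi_angle_limit_iff_logit {n p m : ℕ}
    (X : Matrix (Fin n) (Fin p) ℝ) (β : Fin p → ℝ)
    (W : Matrix (Fin n) (Fin n) ℝ)
    (hW : W = Matrix.diagonal (fun i =>
      Real.exp (X.mulVec β i) / (1 + Real.exp (X.mulVec β i)) ^ 2))
    (D : Matrix (Fin m) (Fin p) ℝ)
    (hker : LinearMap.ker X.mulVecLin ⊓ LinearMap.ker D.mulVecLin = ⊥)
    (S : Finset (Fin m)) (hS : S.card < m)
    (A : ℝ → Matrix (Fin p) (Fin p) ℝ)
    (hA : ∀ ν : ℝ, A ν = (ν / n) • (Xᵀ * W * X) + Dᵀ * D)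
    (Dsc : Matrix {i : Fin m // i ∉ S} (Fin p) ℝ)
    (hDsc : Dsc = D.submatrix (fun i : {i : Fin m // i ∉ S} => (i : Fin m)) id)
    (θ : ℝ → ℝ)
    (hθ : ∀ ν : ℝ, θ ν = Real.arccos (Real.sqrt
      ((Dsc * (A ν)⁻¹ * Dscᵀ).trace / ((m : ℝ) - S.card)))) :
    Tendsto θ atTop (nhds (Real.pi / 2)) ↔
      LinearMap.range (Dscᵀ).mulVecLin ≤ LinearMap.range (Xᵀ).mulVecLin := by
  classical
  -- the weight function
  set wf : Fin n → ℝ := fun i =>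
    Real.exp (X.mulVec β i) / (1 + Real.exp (X.mulVec β i)) ^ 2 with hwf
  have hwfpos : ∀ i, 0 < wf i := by
    intro i
    have h1 : 0 < Real.exp (X.mulVec β i) := Real.exp_pos _
    have h2 : 0 < (1 + Real.exp (X.mulVec β i)) ^ 2 := by positivity
    exact div_pos h1 h2
  have hWsym : Wᵀ = W := by rw [hW]; exact Matrix.diagonal_transpose _
  -- quadratic form computations
  have qW : ∀ a b : Fin n → ℝ, a ⬝ᵥ (W *ᵥ b) = ∑ i, a i * (wf i * b i) := by
    intro a b
    rw [hW]
    simp [dotProduct, Matrix.mulVec_diagonal]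
  set M : Matrix (Fin p) (Fin p) ℝ := Xᵀ * W * X with hM
  set B : Matrix (Fin p) (Fin p) ℝ := Dᵀ * D with hB
  have hMsym : Mᵀ = M := by
    rw [hM, Matrix.transpose_mul, Matrix.transpose_mul, Matrix.transpose_transpose,
      hWsym, Matrix.mul_assoc]
  have hBsym : Bᵀ = B := by
    rw [hB, Matrix.transpose_mul, Matrix.transpose_transpose]
  have quadM : ∀ a v : Fin p → ℝ, a ⬝ᵥ (M *ᵥ v) = ∑ i, (X *ᵥ a) i * (wf i * (X *ᵥ v) i) := by
    intro a v
    rw [hM, ← Matrix.mulVec_mulVec, ← Matrix.mulVec_mulVec,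
      dot_mulVec_comm Xᵀ a (W *ᵥ (X *ᵥ v)), Matrix.transpose_transpose]
    exact qW _ _
  have quadMnn : ∀ v : Fin p → ℝ, 0 ≤ v ⬝ᵥ (M *ᵥ v) := by
    intro v
    rw [quadM]
    apply Finset.sum_nonneg
    intro i _
    have := hwfpos i
    nlinarith [sq_nonneg ((X *ᵥ v) i)]
  have quadB : ∀ v : Fin p → ℝ, v ⬝ᵥ (B *ᵥ v) = (D *ᵥ v) ⬝ᵥ (D *ᵥ v) := by
    intro v
    rw [hB, ← Matrix.mulVec_mulVec, dot_mulVec_comm Dᵀ v (D *ᵥ v),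
      Matrix.transpose_transpose]
  have quadBnn : ∀ v : Fin p → ℝ, 0 ≤ v ⬝ᵥ (B *ᵥ v) := by
    intro v
    rw [quadB]
    exact Finset.sum_nonneg fun i _ => mul_self_nonneg _
  have hAeq : ∀ ν, A ν = (ν / n) • M + B := hA
  have hAsym : ∀ ν, (A ν)ᵀ = A ν := by
    intro ν
    rw [hAeq, Matrix.transpose_add, Matrix.transpose_smul, hMsym, hBsym]
  have quadA : ∀ (ν : ℝ) (a v : Fin p → ℝ),
      a ⬝ᵥ (A ν *ᵥ v) = (ν / n) * (a ⬝ᵥ (M *ᵥ v)) + a ⬝ᵥ (B *ᵥ v) := by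
    intro ν a v
    rw [hAeq, Matrix.add_mulVec, Matrix.smul_mulVec, dotProduct_add,
      dotProduct_smul, smul_eq_mul]
  have quadAnn : ∀ (ν : ℝ), 0 ≤ ν → ∀ v, 0 ≤ v ⬝ᵥ (A ν *ᵥ v) := by
    intro ν hν v
    rw [quadA]
    have h1 : 0 ≤ ν / n := by positivity
    have := quadMnn v
    have := quadBnn v
    nlinarith
  -- positive definiteness for ν ≥ 1
  have hAposdef : ∀ ν : ℝ, 1 ≤ ν → (A ν).PosDef := by
    intro ν hν
    rw [Matrix.posDef_iff_dotProduct_mulVec]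
    constructor
    · show (A ν)ᴴ = A ν
      ext i j
      rw [Matrix.conjTranspose_apply, star_trivial]
      have := hAsym ν
      calc A ν j i = (A ν)ᵀ i j := rfl
        _ = A ν i j := by rw [this]
    · intro x hx
      have hsx : star x = x := by simp
      rw [hsx, quadA]
      rcases eq_or_ne (D *ᵥ x) 0 with hDx | hDx
      · -- then X x ≠ 0
        have hXx : X *ᵥ x ≠ 0 := by
          intro hXx
          apply hx
          have : x ∈ LinearMap.ker X.mulVecLin ⊓ LinearMap.ker D.mulVecLin :=
            ⟨by simpa using hXx, by simpa using hDx⟩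
          rw [hker] at this
          simpa using this
        obtain ⟨i, hi⟩ : ∃ i, (X *ᵥ x) i ≠ 0 := by
          by_contra hcon
          push_neg at hcon
          exact hXx (funext hcon)
        have hn : (0:ℝ) < n := by
          have := i.pos
          exact_mod_cast this
        have hMx : 0 < x ⬝ᵥ (M *ᵥ x) := by
          rw [quadM]
          apply Finset.sum_pos'
          · intro j _
            have := hwfpos j
            nlinarith [sq_nonneg ((X *ᵥ x) j)]
          · refine ⟨i, Finset.mem_univ _, ?_⟩
            have := hwfpos i
            have h2 : 0 < (X *ᵥ x) i * (X *ᵥ x) i := mul_self_pos.mpr hi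
            nlinarith
        have hBx := quadBnn x
        have htpos : 0 < ν / n := div_pos (lt_of_lt_of_le one_pos hν) hn
        nlinarith
      · have hBx : 0 < x ⬝ᵥ (B *ᵥ x) := by
          rw [quadB]
          have hnn : 0 ≤ (D *ᵥ x) ⬝ᵥ (D *ᵥ x) :=
            Finset.sum_nonneg fun i _ => mul_self_nonneg _
          rcases lt_or_eq_of_le hnn with h1 | h1
          · exact h1
          · exact absurd (dotProduct_self_eq_zero.mp h1.symm) hDx
        have hMx := quadMnn x
        have h1 : 0 ≤ ν / n := by positivity
        nlinarith
  -- basic facts about the inverse for ν ≥ 1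
  have hAinv : ∀ ν : ℝ, 1 ≤ ν → ∀ d : Fin p → ℝ,
      A ν *ᵥ ((A ν)⁻¹ *ᵥ d) = d := by
    intro ν hν d
    have hPD := hAposdef ν hν
    have hdet : IsUnit (A ν).det := isUnit_iff_ne_zero.mpr hPD.det_pos.ne'
    rw [Matrix.mulVec_mulVec, Matrix.mul_nonsing_inv _ hdet, Matrix.one_mulVec]
  have htermnn : ∀ ν : ℝ, 1 ≤ ν → ∀ d : Fin p → ℝ,
      0 ≤ d ⬝ᵥ ((A ν)⁻¹ *ᵥ d) := by
    intro ν hν d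
    have hPD := (hAposdef ν hν).inv
    have := hPD.posSemidef.dotProduct_mulVec_nonneg d
    simpa using this
  -- the quadratic form at the inverse
  have hqinv : ∀ ν : ℝ, 1 ≤ ν → ∀ d : Fin p → ℝ,
      ((A ν)⁻¹ *ᵥ d) ⬝ᵥ (A ν *ᵥ ((A ν)⁻¹ *ᵥ d)) = d ⬝ᵥ ((A ν)⁻¹ *ᵥ d) := by
    intro ν hν d
    rw [hAinv ν hν d, dotProduct_comm]
  -- Key lemma 1: rows in the range of Xᵀ have vanishing quadratic form in the limit
  have key_mem : ∀ d : Fin p → ℝ, d ∈ LinearMap.range (Xᵀ).mulVecLin →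
      Tendsto (fun ν => d ⬝ᵥ ((A ν)⁻¹ *ᵥ d)) atTop (nhds 0) := by
    intro d hd
    obtain ⟨y, hy⟩ := hd
    have hy' : Xᵀ *ᵥ y = d := hy
    rcases Nat.eq_zero_or_pos n with hn | hn
    · -- n = 0 : then d = 0
      subst hn
      have hd0 : d = 0 := by
        rw [← hy']
        ext j
        simp [Matrix.mulVec, dotProduct]
      simp only [hd0, zero_dotProduct]
      exact tendsto_const_nhds
    · have hn' : (0:ℝ) < n := by exact_mod_cast hn
      set C : ℝ := ∑ i, (y i)^2 / wf i with hC
      have hCnn : 0 ≤ C := Finset.sum_nonneg fun i _ => by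
        have := hwfpos i; positivity
      have hub : ∀ ν : ℝ, 1 ≤ ν → d ⬝ᵥ ((A ν)⁻¹ *ᵥ d) ≤ C * n / ν := by
        intro ν hν
        have hνpos : (0:ℝ) < ν := lt_of_lt_of_le one_pos hν
        set t : ℝ := ν / n with ht
        have htpos : 0 < t := div_pos hνpos hn'
        set w0 : Fin p → ℝ := (A ν)⁻¹ *ᵥ d with hw0
        set v : ℝ := d ⬝ᵥ w0 with hv
        have hvnn : 0 ≤ v := htermnn ν hν d
        set u : Fin n → ℝ := X *ᵥ w0 with hu
        have hv1 : v = y ⬝ᵥ u := by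
          rw [hv, ← hy', hu, dot_mulVec_comm X y w0]
        have hv2 : w0 ⬝ᵥ (A ν *ᵥ w0) = v := hqinv ν hν d
        have hWu : ∑ i, wf i * (u i)^2 ≤ v / t := by
          rw [le_div_iff₀ htpos]
          have h1 := quadA ν w0 w0
          rw [hv2] at h1
          have h2 : w0 ⬝ᵥ (M *ᵥ w0) = ∑ i, wf i * (u i)^2 := by
            rw [quadM]
            exact Finset.sum_congr rfl fun i _ => by ring
          have h3 := quadBnn w0
          rw [h2] at h1
          nlinarith
        -- Cauchy-Schwarz with weights wf
        have hWpsd : ∀ z : Fin n → ℝ, 0 ≤ z ⬝ᵥ (W *ᵥ z) := by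
          intro z
          rw [qW]
          exact Finset.sum_nonneg fun i _ => by
            have := hwfpos i; nlinarith [sq_nonneg (z i)]
        set a : Fin n → ℝ := fun i => y i / wf i with ha
        have hcs := psd_cauchy_schwarz hWsym hWpsd a u
        have e1 : a ⬝ᵥ (W *ᵥ u) = y ⬝ᵥ u := by
          rw [qW]
          refine Finset.sum_congr rfl fun i _ => ?_
          have := (hwfpos i).ne'
          simp only [ha]
          field_simp
        have e2 : a ⬝ᵥ (W *ᵥ a) = C := by
          rw [qW, hC]
          refine Finset.sum_congr rfl fun i _ => ?_
          have := (hwfpos i).ne'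
          simp only [ha]
          field_simp
        have e3 : u ⬝ᵥ (W *ᵥ u) = ∑ i, wf i * (u i)^2 := by
          rw [qW]
          exact Finset.sum_congr rfl fun i _ => by ring
        rw [e1, e2, e3] at hcs
        -- (y ⬝ᵥ u)^2 ≤ C * (Σ wf u²) ≤ C * (v/t)
        have h4 : v^2 ≤ C * (v / t) := by
          calc v^2 = (y ⬝ᵥ u)^2 := by rw [hv1]
            _ ≤ C * (∑ i, wf i * (u i)^2) := hcs
            _ ≤ C * (v / t) := by
                apply mul_le_mul_of_nonneg_left hWu hCnn
        have hCt : C * n / ν = C / t := by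
          rw [ht]
          field_simp
        rw [hCt]
        rcases eq_or_lt_of_le hvnn with h0 | h0
        · rw [← h0]; positivity
        · have h5 : v * v ≤ (C / t) * v := by
            have : C * (v / t) = (C / t) * v := by field_simp
            nlinarith
          exact le_of_mul_le_mul_right h5 h0
      -- squeeze
      have hup : Tendsto (fun ν : ℝ => C * n / ν) atTop (nhds 0) :=
        tendsto_const_nhds.div_atTop tendsto_id
      refine tendsto_of_tendsto_of_tendsto_of_le_of_le' tendsto_const_nhds hup ?_ ?_
      · filter_upwards [eventually_ge_atTop (1:ℝ)] with ν hν
        exact htermnn ν hν d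
      · filter_upwards [eventually_ge_atTop (1:ℝ)] with ν hν
        exact hub ν hν
  -- Key lemma 2: rows not in the range of Xᵀ have quadratic form bounded below
  have key_not : ∀ d : Fin p → ℝ, d ∉ LinearMap.range (Xᵀ).mulVecLin →
      ∃ c : ℝ, 0 < c ∧ ∀ ν : ℝ, 1 ≤ ν → c ≤ d ⬝ᵥ ((A ν)⁻¹ *ᵥ d) := by
    intro d hd
    obtain ⟨z, hz, hdz⟩ := exists_ker_not_orth X hd
    have hzne : z ≠ 0 := by
      intro h
      apply hdz
      rw [h, dotProduct_zero]
    have hDz : D *ᵥ z ≠ 0 := by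
      intro h
      apply hzne
      have : z ∈ LinearMap.ker X.mulVecLin ⊓ LinearMap.ker D.mulVecLin :=
        ⟨by simpa using hz, by simpa using h⟩
      rw [hker] at this
      simpa using this
    have hzBz : 0 < z ⬝ᵥ (B *ᵥ z) := by
      rw [quadB]
      have hnn : 0 ≤ (D *ᵥ z) ⬝ᵥ (D *ᵥ z) :=
        Finset.sum_nonneg fun i _ => mul_self_nonneg _
      rcases lt_or_eq_of_le hnn with h1 | h1
      · exact h1
      · exact absurd (dotProduct_self_eq_zero.mp h1.symm) hDz
    refine ⟨(d ⬝ᵥ z)^2 / (z ⬝ᵥ (B *ᵥ z)), div_pos (by positivity) hzBz, ?_⟩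
    intro ν hν
    set w0 : Fin p → ℝ := (A ν)⁻¹ *ᵥ d with hw0
    set v : ℝ := d ⬝ᵥ w0 with hv
    have hv2 : w0 ⬝ᵥ (A ν *ᵥ w0) = v := hqinv ν hν d
    have hvz : w0 ⬝ᵥ (A ν *ᵥ z) = d ⬝ᵥ z := by
      rw [sym_form_comm (hAsym ν) w0 z, hAinv ν hν d, dotProduct_comm]
    have hzAz : z ⬝ᵥ (A ν *ᵥ z) = z ⬝ᵥ (B *ᵥ z) := by
      rw [quadA]
      have : z ⬝ᵥ (M *ᵥ z) = 0 := by
        rw [quadM, hz]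
        simp
      rw [this, mul_zero, zero_add]
    have hcs := psd_cauchy_schwarz (hAsym ν) (quadAnn ν (le_trans zero_le_one hν)) w0 z
    rw [hvz, hv2, hzAz] at hcs
    rw [div_le_iff₀ hzBz]
    exact hcs
  -- trace identity
  have htr : ∀ G : Matrix (Fin p) (Fin p) ℝ,
      (Dsc * G * Dscᵀ).trace = ∑ i : {i : Fin m // i ∉ S}, Dsc i ⬝ᵥ (G *ᵥ Dsc i) := by
    intro G
    rw [Matrix.trace]
    refine Finset.sum_congr rfl fun i _ => ?_
    simp only [Matrix.diag_apply, Matrix.mul_apply, Matrix.transpose_apply, dotProduct,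
      Matrix.mulVec, Finset.sum_mul, Finset.mul_sum]
    rw [Finset.sum_comm]
    exact Finset.sum_congr rfl fun j _ => Finset.sum_congr rfl fun k _ => by ring
  set f : ℝ → ℝ := fun ν => (Dsc * (A ν)⁻¹ * Dscᵀ).trace with hfdef
  have hfsum : ∀ ν : ℝ, f ν = ∑ i : {i : Fin m // i ∉ S}, Dsc i ⬝ᵥ ((A ν)⁻¹ *ᵥ Dsc i) :=
    fun ν => htr _
  have hfnn : ∀ ν : ℝ, 1 ≤ ν → 0 ≤ f ν := by
    intro ν hν
    rw [hfsum]
    exact Finset.sum_nonneg fun i _ => htermnn ν hν _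
  have hspos : (0:ℝ) < (m:ℝ) - S.card := sub_pos.mpr (by exact_mod_cast hS)
  constructor
  · intro hlim
    set u : ℝ → ℝ := fun ν => Real.sqrt (f ν / ((m:ℝ) - S.card)) with hudef
    have hθu : ∀ ν, θ ν = Real.arccos (u ν) := hθ
    have hne : ∀ᶠ ν in atTop, θ ν ≠ 0 :=
      hlim.eventually_ne (ne_of_gt (by positivity))
    have hult : ∀ᶠ ν in atTop, u ν < 1 := by
      filter_upwards [hne] with ν h
      by_contra hge
      push_neg at hge
      exact h (by rw [hθu]; exact Real.arccos_eq_zero.mpr hge)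
    have hcos : Tendsto (fun ν => Real.cos (θ ν)) atTop (nhds 0) := by
      have := (Real.continuous_cos.tendsto (Real.pi/2)).comp hlim
      simpa [Real.cos_pi_div_two, Function.comp_def] using this
    have huten : Tendsto u atTop (nhds 0) := by
      apply hcos.congr'
      filter_upwards [hult] with ν h1
      rw [hθu, Real.cos_arccos (le_trans (by norm_num) (Real.sqrt_nonneg _)) h1.le]
    have hfdiv : Tendsto (fun ν => f ν / ((m:ℝ) - S.card)) atTop (nhds 0) := by
      have hsq : Tendsto (fun ν => u ν * u ν) atTop (nhds 0) := by
        simpa using huten.mul huten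
      apply hsq.congr'
      filter_upwards [eventually_ge_atTop (1:ℝ)] with ν h1
      exact Real.mul_self_sqrt (div_nonneg (hfnn ν h1) hspos.le)
    have hf0 : Tendsto f atTop (nhds 0) := by
      have := hfdiv.const_mul ((m:ℝ) - S.card)
      rw [mul_zero] at this
      apply this.congr
      intro ν
      exact mul_div_cancel₀ _ hspos.ne'
    have hrow : ∀ i : {i : Fin m // i ∉ S}, Dsc i ∈ LinearMap.range (Xᵀ).mulVecLin := by
      intro i
      by_contra hni
      obtain ⟨c, hc, hge⟩ := key_not _ hni
      have hterm : Tendsto (fun ν => Dsc i ⬝ᵥ ((A ν)⁻¹ *ᵥ Dsc i)) atTop (nhds 0) := by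
        refine tendsto_of_tendsto_of_tendsto_of_le_of_le' tendsto_const_nhds hf0 ?_ ?_
        · filter_upwards [eventually_ge_atTop (1:ℝ)] with ν h1
          exact htermnn ν h1 _
        · filter_upwards [eventually_ge_atTop (1:ℝ)] with ν h1
          rw [hfsum ν]
          exact Finset.single_le_sum (fun j _ => htermnn ν h1 _) (Finset.mem_univ i)
      have hlt : ∀ᶠ ν in atTop, Dsc i ⬝ᵥ ((A ν)⁻¹ *ᵥ Dsc i) < c :=
        hterm (Iio_mem_nhds hc)
      obtain ⟨ν, h1, h2⟩ := ((eventually_ge_atTop (1:ℝ)).and hlt).exists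
      exact absurd (hge ν h1) (not_le.mpr h2)
    rw [Matrix.range_mulVecLin, Submodule.span_le]
    rintro _ ⟨i, rfl⟩
    exact hrow i
  · intro hrange
    have hrow : ∀ i : {i : Fin m // i ∉ S}, Dsc i ∈ LinearMap.range (Xᵀ).mulVecLin := by
      intro i
      apply hrange
      refine ⟨Pi.single i 1, ?_⟩
      show Dscᵀ *ᵥ Pi.single i 1 = Dsc i
      ext j
      simp [Matrix.mulVec, dotProduct, Pi.single_apply]
    have hf0 : Tendsto f atTop (nhds 0) := by
      have := tendsto_finset_sum (Finset.univ : Finset {i : Fin m // i ∉ S})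
        (fun i _ => key_mem _ (hrow i))
      rw [Finset.sum_const_zero] at this
      apply this.congr
      intro ν
      exact (hfsum ν).symm
    have hfdiv : Tendsto (fun ν => f ν / ((m:ℝ) - S.card)) atTop (nhds 0) := by
      simpa using hf0.div_const ((m:ℝ) - S.card)
    have hu : Tendsto (fun ν => Real.sqrt (f ν / ((m:ℝ) - S.card))) atTop (nhds 0) := by
      have := (Real.continuous_sqrt.tendsto 0).comp hfdiv
      simpa [Function.comp_def] using this
    have harc := (Real.continuous_arccos.tendsto 0).comp hu
    rw [Real.arccos_zero] at harc
    apply harc.congr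
    intro ν
    exact (hθ ν).symm
end

section
/- Let X ∈ ℝ^{n×p} and D ∈ ℝ^{m×p} be real matrices with ker(X) ∩ ker(D) = {0}, and for ν > 0 set A(ν) = (ν/n)·XᵀX + DᵀD. If d ∈ ℝ^p lies in the column space of Xᵀ, then dᵀ A(ν)⁻¹ d → 0 as ν → +∞. -/
open Matrix Real Filter

lemma dot_transpose_mul_self {a b : ℕ} (M : Matrix (Fin a) (Fin b) ℝ) (x y : Fin b → ℝ) :
    x ⬝ᵥ ((Mᵀ * M) *ᵥ y) = (M *ᵥ x) ⬝ᵥ (M *ᵥ y) := by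
  rw [← Matrix.mulVec_mulVec, Matrix.dotProduct_mulVec, Matrix.vecMul_transpose]

lemma dot_self_nonneg' {a : ℕ} (v : Fin a → ℝ) : 0 ≤ v ⬝ᵥ v :=
  Finset.sum_nonneg fun i _ => mul_self_nonneg _

lemma cs' {a : ℕ} (u v : Fin a → ℝ) : (u ⬝ᵥ v) ^ 2 ≤ (u ⬝ᵥ u) * (v ⬝ᵥ v) := by
  have := Finset.sum_mul_sq_le_sq_mul_sq Finset.univ u v
  simpa [dotProduct, sq] using this

/-- **Forward direction of Theorem 1 (eq. (7)).** If `d ∈ Im(Xᵀ)`, then the quadratic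
form `dᵀ A(ν)⁻¹ d` with `A(ν) = (ν/n)·XᵀX + DᵀD` tends to `0` as `ν → +∞`. -/
theorem quadform_tendsto_zero_of_mem_rowspace {n p m : ℕ}
    (X : Matrix (Fin n) (Fin p) ℝ) (D : Matrix (Fin m) (Fin p) ℝ)
    (hker : LinearMap.ker X.mulVecLin ⊓ LinearMap.ker D.mulVecLin = ⊥)
    (A : ℝ → Matrix (Fin p) (Fin p) ℝ)
    (hA : ∀ ν : ℝ, A ν = (ν / n) • (Xᵀ * X) + Dᵀ * D)
    (d : Fin p → ℝ) (hd : d ∈ LinearMap.range (Xᵀ).mulVecLin) :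
    Tendsto (fun ν : ℝ => d ⬝ᵥ ((A ν)⁻¹ *ᵥ d)) atTop (nhds 0) := by
  obtain ⟨u, hu⟩ := hd
  simp only [Matrix.mulVecLin_apply] at hu
  rcases Nat.eq_zero_or_pos n with hn | hn
  · have hd0 : d = 0 := by
      subst hn
      rw [← hu]; ext i; simp [Matrix.mulVec, dotProduct]
    simpa [hd0] using (tendsto_const_nhds : Tendsto (fun _ : ℝ => (0:ℝ)) atTop (nhds 0))
  · have hn' : (0:ℝ) < n := by exact_mod_cast hn
    set C : ℝ := n * (u ⬝ᵥ u) with hC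
    have hC0 : 0 ≤ C := mul_nonneg hn'.le (dot_self_nonneg' u)
    have key : ∀ ν : ℝ, 0 < ν →
        0 ≤ d ⬝ᵥ ((A ν)⁻¹ *ᵥ d) ∧ d ⬝ᵥ ((A ν)⁻¹ *ᵥ d) ≤ C / ν := by
      intro ν hν
      have hνn : 0 < ν / n := div_pos hν hn'
      -- positive definiteness of A ν
      have hherm : (A ν).IsHermitian := by
        rw [hA]
        have h1 : (Xᵀ * X).IsHermitian := by simpa using Matrix.isHermitian_conjTranspose_mul_self X
        have h2 : (Dᵀ * D).IsHermitian := by simpa using Matrix.isHermitian_conjTranspose_mul_self D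
        unfold Matrix.IsHermitian at *
        simp only [Matrix.conjTranspose_add, Matrix.conjTranspose_smul, star_trivial, h1, h2]
      have hpos : (A ν).PosDef := by
        refine Matrix.PosDef.of_dotProduct_mulVec_pos hherm (fun x hx => ?_)
        have hx' : ¬ (X *ᵥ x = 0 ∧ D *ᵥ x = 0) := by
          intro ⟨h1, h2⟩
          apply hx
          have : x ∈ LinearMap.ker X.mulVecLin ⊓ LinearMap.ker D.mulVecLin := by
            constructor <;> simpa [Matrix.mulVecLin_apply]
          rw [hker] at this
          simpa using this
        have hexp : star x ⬝ᵥ (A ν) *ᵥ x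
            = (ν / n) * ((X *ᵥ x) ⬝ᵥ (X *ᵥ x)) + (D *ᵥ x) ⬝ᵥ (D *ᵥ x) := by
          rw [hA, Matrix.add_mulVec, Matrix.smul_mulVec]
          simp only [star_trivial, dotProduct_add, dotProduct_smul, smul_eq_mul]
          rw [dot_transpose_mul_self, dot_transpose_mul_self]
        rw [hexp]
        rcases (not_and_or.mp hx') with h | h
        · have h1 : 0 < (X *ᵥ x) ⬝ᵥ (X *ᵥ x) :=
            (dot_self_nonneg' (X *ᵥ x)).lt_of_ne'
              (fun hh => h (dotProduct_self_eq_zero.mp hh))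
          nlinarith [dot_self_nonneg' (D *ᵥ x)]
        · have h1 : 0 < (D *ᵥ x) ⬝ᵥ (D *ᵥ x) :=
            (dot_self_nonneg' (D *ᵥ x)).lt_of_ne'
              (fun hh => h (dotProduct_self_eq_zero.mp hh))
          nlinarith [dot_self_nonneg' (X *ᵥ x)]
      have hdet : IsUnit (A ν).det := isUnit_iff_ne_zero.mpr hpos.det_pos.ne'
      set w : Fin p → ℝ := (A ν)⁻¹ *ᵥ d with hwdef
      have hw : A ν *ᵥ w = d := by
        rw [hwdef, Matrix.mulVec_mulVec, Matrix.mul_nonsing_inv _ hdet, Matrix.one_mulVec]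
      set q : ℝ := d ⬝ᵥ w with hqdef
      have hq : q = (ν / n) * ((X *ᵥ w) ⬝ᵥ (X *ᵥ w)) + (D *ᵥ w) ⬝ᵥ (D *ᵥ w) := by
        rw [hqdef, ← hw, dotProduct_comm, hA, Matrix.add_mulVec, Matrix.smul_mulVec]
        simp only [dotProduct_add, dotProduct_smul, smul_eq_mul]
        rw [dot_transpose_mul_self, dot_transpose_mul_self]
      have hq0 : 0 ≤ q := by
        rw [hq]
        have := dot_self_nonneg' (X *ᵥ w)
        have := dot_self_nonneg' (D *ᵥ w)
        positivity
      have hqu : q = u ⬝ᵥ (X *ᵥ w) := by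
        rw [hqdef, ← hu, Matrix.mulVec_transpose, ← Matrix.dotProduct_mulVec]
      have hcs : q ^ 2 ≤ (u ⬝ᵥ u) * ((X *ᵥ w) ⬝ᵥ (X *ᵥ w)) := by
        rw [hqu]; exact cs' u (X *ᵥ w)
      have hbound : (ν / n) * ((X *ᵥ w) ⬝ᵥ (X *ᵥ w)) ≤ q := by
        rw [hq]; nlinarith [dot_self_nonneg' (D *ᵥ w)]
      refine ⟨hq0, ?_⟩
      rw [le_div_iff₀ hν]
      have hb' : ν * ((X *ᵥ w) ⬝ᵥ (X *ᵥ w)) ≤ q * n := by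
        rw [div_mul_eq_mul_div, div_le_iff₀ hn'] at hbound
        linarith
      rcases hq0.lt_or_eq with hq0' | hq0'
      · have h1 : q ^ 2 * ν ≤ (u ⬝ᵥ u) * ((X *ᵥ w) ⬝ᵥ (X *ᵥ w)) * ν :=
          mul_le_mul_of_nonneg_right hcs hν.le
        have h2 : (u ⬝ᵥ u) * (ν * ((X *ᵥ w) ⬝ᵥ (X *ᵥ w))) ≤ (u ⬝ᵥ u) * (q * n) :=
          mul_le_mul_of_nonneg_left hb' (dot_self_nonneg' u)
        nlinarith [hq0']
      · rw [← hq0', zero_mul]; exact hC0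
    have hlim : Tendsto (fun ν : ℝ => C / ν) atTop (nhds 0) :=
      Tendsto.div_atTop tendsto_const_nhds tendsto_id
    refine tendsto_of_tendsto_of_tendsto_of_le_of_le' tendsto_const_nhds hlim ?_ ?_
    · filter_upwards [eventually_gt_atTop 0] with ν hν using (key ν hν).1
    · filter_upwards [eventually_gt_atTop 0] with ν hν using (key ν hν).2
end

section
/- Let X ∈ ℝ^{n×p} and D ∈ ℝ^{m×p} be real matrices with ker(X) ∩ ker(D) = {0}, and for ν > 0 set A(ν) = (ν/n)·XᵀX + DᵀD. If d ∈ ℝ^p does NOT lie in the column space of Xᵀ, then there exists a constant c > 0 such that dᵀ A(ν)⁻¹ d ≥ c for every ν > 0; in particular dᵀ A(ν)⁻¹ d does not tend to 0 as ν → +∞. -/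
open Matrix Real Filter

lemma dot_self_nonneg'_s3 {k : ℕ} (x : Fin k → ℝ) : (0:ℝ) ≤ x ⬝ᵥ x :=
  Finset.sum_nonneg fun i _ => mul_self_nonneg _

/-- Symmetry of the quadratic form for a real symmetric matrix. -/
lemma dot_mulVec_symm {p : ℕ} {B : Matrix (Fin p) (Fin p) ℝ}
    (hB : B.IsHermitian) (a b : Fin p → ℝ) :
    a ⬝ᵥ B *ᵥ b = b ⬝ᵥ B *ᵥ a := by
  have hBt : Bᵀ = B := by
    simpa [Matrix.conjTranspose_eq_transpose_of_trivial, Matrix.IsSymm] using hB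
  calc a ⬝ᵥ B *ᵥ b = (a ᵥ* B) ⬝ᵥ b := dotProduct_mulVec a B b
    _ = (Bᵀ *ᵥ a) ⬝ᵥ b := by rw [Matrix.mulVec_transpose]
    _ = (B *ᵥ a) ⬝ᵥ b := by rw [hBt]
    _ = b ⬝ᵥ B *ᵥ a := dotProduct_comm _ _

/-- Cauchy–Schwarz for the bilinear form of a positive semidefinite real matrix. -/
lemma posSemidef_cauchySchwarz {p : ℕ} {B : Matrix (Fin p) (Fin p) ℝ}
    (hB : B.PosSemidef) (u v : Fin p → ℝ) :
    (u ⬝ᵥ B *ᵥ v) ^ 2 ≤ (u ⬝ᵥ B *ᵥ u) * (v ⬝ᵥ B *ᵥ v) := by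
  have key : ∀ t : ℝ,
      0 ≤ (v ⬝ᵥ B *ᵥ v) * (t * t) + (2 * (u ⬝ᵥ B *ᵥ v)) * t + (u ⬝ᵥ B *ᵥ u) := by
    intro t
    have h0 := (posSemidef_iff_dotProduct_mulVec.mp hB).2 (u + t • v)
    rw [star_trivial] at h0
    have hexp : (u + t • v) ⬝ᵥ B *ᵥ (u + t • v)
        = (v ⬝ᵥ B *ᵥ v) * (t * t) + (2 * (u ⬝ᵥ B *ᵥ v)) * t + (u ⬝ᵥ B *ᵥ u) := by
      rw [mulVec_add, mulVec_smul, dotProduct_add, add_dotProduct, add_dotProduct,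
        dotProduct_smul, smul_dotProduct, smul_dotProduct, dotProduct_smul,
        dot_mulVec_symm hB.1 v u]
      simp only [smul_eq_mul]
      ring
    linarith [hexp ▸ h0]
  have hdis := discrim_le_zero key
  rw [discrim] at hdis
  nlinarith [hdis]

/-- If `d` is not in the row space of `X`, there is a kernel vector of `X` not
orthogonal to `d`. -/
lemma exists_ker_dot {n p : ℕ} (X : Matrix (Fin n) (Fin p) ℝ) (d : Fin p → ℝ)
    (hd : d ∉ LinearMap.range (Xᵀ).mulVecLin) :
    ∃ v : Fin p → ℝ, X *ᵥ v = 0 ∧ d ⬝ᵥ v ≠ 0 := by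
  by_contra hcon
  push_neg at hcon
  apply hd
  set e : (Fin p → ℝ) ≃ₗ[ℝ] EuclideanSpace ℝ (Fin p) :=
    (WithLp.linearEquiv 2 ℝ (Fin p → ℝ)).symm with he
  set W : Submodule ℝ (EuclideanSpace ℝ (Fin p)) :=
    (LinearMap.range (Xᵀ).mulVecLin).map (e : (Fin p → ℝ) →ₗ[ℝ] EuclideanSpace ℝ (Fin p)) with hW
  have hker : ∀ y : EuclideanSpace ℝ (Fin p), y ∈ Wᗮ → X *ᵥ (e.symm y) = 0 := by
    intro y hy
    funext i
    have hmem : e ((Xᵀ) *ᵥ Pi.single i 1) ∈ W :=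
      Submodule.mem_map_of_mem ⟨Pi.single i 1, rfl⟩
    have h0 := (Submodule.mem_orthogonal W y).1 hy _ hmem
    rw [EuclideanSpace.inner_eq_star_dotProduct, star_trivial] at h0
    have hsingle : (Xᵀ) *ᵥ Pi.single i 1 = fun j => X i j := by
      funext j
      simp [Matrix.mulVec_single]
    simp only [Pi.zero_apply]
    calc (X *ᵥ (e.symm y)) i = (fun j => X i j) ⬝ᵥ (e.symm y) := rfl
      _ = 0 := by rw [← hsingle, dotProduct_comm]; exact h0
  have hdd : e d ∈ Wᗮᗮ := by
    rw [Submodule.mem_orthogonal]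
    intro y hy
    rw [EuclideanSpace.inner_eq_star_dotProduct, star_trivial]
    have hXy := hker y hy
    have := hcon (e.symm y) hXy
    calc (e d).ofLp ⬝ᵥ y.ofLp
        = (e.symm y) ⬝ᵥ d := dotProduct_comm _ _
      _ = d ⬝ᵥ (e.symm y) := dotProduct_comm _ _
      _ = 0 := this
  rw [Submodule.orthogonal_orthogonal] at hdd
  obtain ⟨w, hw, hew⟩ := hdd
  rwa [← e.injective hew]

/-- **Converse direction of Theorem 1.** If `d ∉ Im(Xᵀ)`, then the quadratic form
`dᵀ A(ν)⁻¹ d` with `A(ν) = (ν/n)·XᵀX + DᵀD` is bounded below by a positive constant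
uniformly in `ν > 0`; in particular it does not tend to `0` as `ν → +∞`. -/
theorem quadform_bounded_below_of_not_mem_rowspace {n p m : ℕ}
    (X : Matrix (Fin n) (Fin p) ℝ) (D : Matrix (Fin m) (Fin p) ℝ)
    (hker : LinearMap.ker X.mulVecLin ⊓ LinearMap.ker D.mulVecLin = ⊥)
    (A : ℝ → Matrix (Fin p) (Fin p) ℝ)
    (hA : ∀ ν : ℝ, A ν = (ν / n) • (Xᵀ * X) + Dᵀ * D)
    (d : Fin p → ℝ) (hd : d ∉ LinearMap.range (Xᵀ).mulVecLin) :
    (∃ c : ℝ, 0 < c ∧ ∀ ν : ℝ, 0 < ν → c ≤ d ⬝ᵥ ((A ν)⁻¹ *ᵥ d)) ∧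
      ¬ Tendsto (fun ν : ℝ => d ⬝ᵥ ((A ν)⁻¹ *ᵥ d)) atTop (nhds 0) := by
  classical
  -- quadratic forms of the Gram pieces
  have hXq : ∀ x : Fin p → ℝ, x ⬝ᵥ (Xᵀ * X) *ᵥ x = (X *ᵥ x) ⬝ᵥ (X *ᵥ x) := by
    intro x
    rw [← mulVec_mulVec, dotProduct_mulVec, vecMul_transpose]
  have hDq : ∀ x : Fin p → ℝ, x ⬝ᵥ (Dᵀ * D) *ᵥ x = (D *ᵥ x) ⬝ᵥ (D *ᵥ x) := by
    intro x
    rw [← mulVec_mulVec, dotProduct_mulVec, vecMul_transpose]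
  have quad : ∀ (ν : ℝ) (x : Fin p → ℝ),
      x ⬝ᵥ (A ν) *ᵥ x = (ν / n) * ((X *ᵥ x) ⬝ᵥ (X *ᵥ x)) + (D *ᵥ x) ⬝ᵥ (D *ᵥ x) := by
    intro ν x
    rw [hA, add_mulVec, smul_mulVec, dotProduct_add, dotProduct_smul,
      smul_eq_mul, hXq, hDq]
  obtain ⟨v, hXv, hdv⟩ := exists_ker_dot X d hd
  have hv0 : v ≠ 0 := fun h => hdv (by simp [h])
  -- D v ≠ 0
  have hDv : D *ᵥ v ≠ 0 := by
    intro h0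
    have hmem : v ∈ LinearMap.ker X.mulVecLin ⊓ LinearMap.ker D.mulVecLin :=
      ⟨by simpa [Matrix.mulVecLin_apply] using hXv, by simpa [Matrix.mulVecLin_apply] using h0⟩
    rw [hker, Submodule.mem_bot] at hmem
    exact hv0 hmem
  have hb : 0 < (D *ᵥ v) ⬝ᵥ (D *ᵥ v) := by
    rcases lt_or_eq_of_le (dot_self_nonneg'_s3 (D *ᵥ v)) with h | h
    · exact h
    · exact absurd (dotProduct_self_eq_zero.mp h.symm) hDv
  set b : ℝ := (D *ᵥ v) ⬝ᵥ (D *ᵥ v) with hbdef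
  set c : ℝ := (d ⬝ᵥ v) ^ 2 / b with hcdef
  have hc : 0 < c := div_pos (pow_two_pos_of_ne_zero hdv) hb
  -- positive definiteness of A ν for ν > 0
  have hPD : ∀ ν : ℝ, 0 < ν → (A ν).PosDef := by
    intro ν hν
    refine posDef_iff_dotProduct_mulVec.mpr ⟨?_, ?_⟩
    · -- Hermitian
      rw [hA]
      show ((ν / n : ℝ) • (Xᵀ * X) + Dᵀ * D)ᴴ = _
      rw [Matrix.conjTranspose_eq_transpose_of_trivial, transpose_add, transpose_smul,
        transpose_mul, transpose_transpose, transpose_mul, transpose_transpose]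
    · intro x hx
      rw [star_trivial, quad]
      have h1 : 0 ≤ (ν / n) * ((X *ᵥ x) ⬝ᵥ (X *ᵥ x)) :=
        mul_nonneg (div_nonneg hν.le (Nat.cast_nonneg n)) (dot_self_nonneg'_s3 _)
      have h2 : 0 ≤ (D *ᵥ x) ⬝ᵥ (D *ᵥ x) := dot_self_nonneg'_s3 _
      rcases lt_or_eq_of_le (add_nonneg h1 h2) with h | h
      · exact h
      · exfalso
        have hq1 : (ν / n) * ((X *ᵥ x) ⬝ᵥ (X *ᵥ x)) = 0 := by linarith
        have hq2 : (D *ᵥ x) ⬝ᵥ (D *ᵥ x) = 0 := by linarith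
        have hDx : D *ᵥ x = 0 := dotProduct_self_eq_zero.mp hq2
        have hXx : X *ᵥ x = 0 := by
          rcases Nat.eq_zero_or_pos n with hn | hn
          · subst hn
            exact Subsingleton.elim _ _
          · have hpos : (0 : ℝ) < ν / n := div_pos hν (by exact_mod_cast hn)
            have := mul_eq_zero.mp hq1
            rcases this with h' | h'
            · exact absurd h' hpos.ne'
            · exact dotProduct_self_eq_zero.mp h'
        have hmem : x ∈ LinearMap.ker X.mulVecLin ⊓ LinearMap.ker D.mulVecLin :=
          ⟨by simpa [Matrix.mulVecLin_apply] using hXx,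
           by simpa [Matrix.mulVecLin_apply] using hDx⟩
        rw [hker, Submodule.mem_bot] at hmem
        exact hx hmem
  have hbound : ∀ ν : ℝ, 0 < ν → c ≤ d ⬝ᵥ ((A ν)⁻¹ *ᵥ d) := by
    intro ν hν
    have hpd := hPD ν hν
    have hdet : IsUnit (A ν).det := isUnit_iff_ne_zero.mpr hpd.det_pos.ne'
    set u : Fin p → ℝ := (A ν)⁻¹ *ᵥ d with hu
    have hAu : (A ν) *ᵥ u = d := by
      rw [hu, mulVec_mulVec, Matrix.mul_nonsing_inv _ hdet, one_mulVec]
    have hCS := posSemidef_cauchySchwarz hpd.posSemidef u v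
    have h1 : u ⬝ᵥ (A ν) *ᵥ v = d ⬝ᵥ v := by
      rw [dot_mulVec_symm hpd.1 u v, hAu, dotProduct_comm]
    have h2 : u ⬝ᵥ (A ν) *ᵥ u = d ⬝ᵥ u := by
      rw [dot_mulVec_symm hpd.1 u u, hAu, dotProduct_comm]
    have h3 : v ⬝ᵥ (A ν) *ᵥ v = b := by
      rw [quad, hXv]
      simp [hbdef]
    rw [h1, h2, h3] at hCS
    rw [hcdef, div_le_iff₀ hb]
    calc (d ⬝ᵥ v) ^ 2 ≤ d ⬝ᵥ u * b := hCS
      _ = (d ⬝ᵥ ((A ν)⁻¹ *ᵥ d)) * b := by rw [hu]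
  refine ⟨⟨c, hc, hbound⟩, ?_⟩
  intro hT
  have h1 : ∀ᶠ ν in atTop, d ⬝ᵥ ((A ν)⁻¹ *ᵥ d) < c :=
    hT.eventually (eventually_lt_nhds hc)
  have h2 : ∀ᶠ ν in atTop, (0 : ℝ) < ν := eventually_gt_atTop 0
  obtain ⟨ν, hν1, hν2⟩ := (h1.and h2).exists
  linarith [hbound ν hν2]
end

section
/- Let X ∈ ℝ^{n×p} and D ∈ ℝ^{m×p} be real matrices with ker(X) ∩ ker(D) = {0}, and for ν > 0 set A(ν) = (ν/n)·XᵀX + DᵀD. If d = Xᵀg for some g ∈ ℝⁿ, then for every ν > 0, dᵀ A(ν)⁻¹ d ≤ n·‖g‖² / ν. -/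
open Matrix Real

private lemma dotSelf_nonneg {k : ℕ} (v : Fin k → ℝ) : 0 ≤ v ⬝ᵥ v :=
  Finset.sum_nonneg fun i _ => mul_self_nonneg (v i)

private lemma dotSelf_pos {k : ℕ} {v : Fin k → ℝ} (hv : v ≠ 0) : 0 < v ⬝ᵥ v :=
  lt_of_le_of_ne (dotSelf_nonneg v) fun h => hv (dotProduct_self_eq_zero.mp h.symm)

/-- **Quantitative forward direction of Theorem 1.** If `d = Xᵀg`, then for every
`ν > 0` one has `dᵀ A(ν)⁻¹ d ≤ n·‖g‖²/ν`, where `A(ν) = (ν/n)·XᵀX + DᵀD` and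
`‖g‖` is the Euclidean norm of `g`. -/
theorem quadform_decay_of_rowspace {n p m : ℕ}
    (X : Matrix (Fin n) (Fin p) ℝ) (D : Matrix (Fin m) (Fin p) ℝ)
    (hker : LinearMap.ker X.mulVecLin ⊓ LinearMap.ker D.mulVecLin = ⊥)
    (A : ℝ → Matrix (Fin p) (Fin p) ℝ)
    (hA : ∀ ν : ℝ, A ν = (ν / n) • (Xᵀ * X) + Dᵀ * D)
    (g : EuclideanSpace ℝ (Fin n)) (d : Fin p → ℝ) (hd : d = Xᵀ *ᵥ g) :
    ∀ ν : ℝ, 0 < ν → d ⬝ᵥ ((A ν)⁻¹ *ᵥ d) ≤ n * ‖g‖ ^ 2 / ν := by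
  intro ν hν
  rcases Nat.eq_zero_or_pos n with hn | hn
  · subst hn
    have hd0 : d = 0 := by
      funext j
      simp [hd, Matrix.mulVec, dotProduct]
    rw [hd0]
    simp
  -- main case : n > 0
  have hnR : (0:ℝ) < n := by exact_mod_cast hn
  have hc : 0 < ν / n := div_pos hν hnR
  -- the quadratic form identity
  have hquad : ∀ x : Fin p → ℝ,
      x ⬝ᵥ (A ν *ᵥ x) = (ν / n) * ((X *ᵥ x) ⬝ᵥ (X *ᵥ x)) + (D *ᵥ x) ⬝ᵥ (D *ᵥ x) := by
    intro x
    rw [hA]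
    rw [Matrix.add_mulVec, dotProduct_add, Matrix.smul_mulVec,
      dotProduct_smul]
    have h1 : x ⬝ᵥ ((Xᵀ * X) *ᵥ x) = (X *ᵥ x) ⬝ᵥ (X *ᵥ x) := by
      rw [← Matrix.mulVec_mulVec, Matrix.dotProduct_mulVec, Matrix.vecMul_transpose]
    have h2 : x ⬝ᵥ ((Dᵀ * D) *ᵥ x) = (D *ᵥ x) ⬝ᵥ (D *ᵥ x) := by
      rw [← Matrix.mulVec_mulVec, Matrix.dotProduct_mulVec, Matrix.vecMul_transpose]
    rw [h1, h2]
    simp [smul_eq_mul]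
  -- positive definiteness of A ν
  have hPD : (A ν).PosDef := by
    have hX : (Xᵀ * X).IsHermitian := by
      simpa [Matrix.conjTranspose_eq_transpose_of_trivial] using
        Matrix.isHermitian_conjTranspose_mul_self X
    have hD : (Dᵀ * D).IsHermitian := by
      simpa [Matrix.conjTranspose_eq_transpose_of_trivial] using
        Matrix.isHermitian_conjTranspose_mul_self D
    have hsmul : ((ν / (n:ℝ)) • (Xᵀ * X)).IsHermitian := by
      show _ᴴ = _
      rw [Matrix.conjTranspose_smul, hX.eq]
      simp
    rw [Matrix.posDef_iff_dotProduct_mulVec]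
    constructor
    · rw [hA]
      exact hsmul.add hD
    · intro x hx
      have hx' : X *ᵥ x ≠ 0 ∨ D *ᵥ x ≠ 0 := by
        by_contra h
        push_neg at h
        have hmem : x ∈ LinearMap.ker X.mulVecLin ⊓ LinearMap.ker D.mulVecLin := by
          constructor <;> simp [LinearMap.mem_ker, Matrix.mulVecLin_apply, h.1, h.2]
        rw [hker] at hmem
        exact hx (by simpa using hmem)
      have : (0:ℝ) < x ⬝ᵥ (A ν *ᵥ x) := by
        rw [hquad]
        rcases hx' with h | h
        · have := dotSelf_pos h
          have h2 := dotSelf_nonneg (D *ᵥ x)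
          nlinarith
        · have := dotSelf_pos h
          have h2 := dotSelf_nonneg (X *ᵥ x)
          nlinarith
      simpa using this
  have hdet : IsUnit (A ν).det := isUnit_iff_ne_zero.mpr (ne_of_gt hPD.det_pos)
  set u := (A ν)⁻¹ *ᵥ d with hu
  have hAu : A ν *ᵥ u = d := by
    rw [hu, Matrix.mulVec_mulVec, Matrix.mul_nonsing_inv _ hdet, Matrix.one_mulVec]
  set v := X *ᵥ u with hv
  set t := d ⬝ᵥ u with ht
  -- t = uᵀ A u
  have htAu : t = u ⬝ᵥ (A ν *ᵥ u) := by
    rw [ht, ← hAu, dotProduct_comm]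
  have ht1 : (ν / n) * (v ⬝ᵥ v) ≤ t := by
    rw [htAu, hquad]
    have := dotSelf_nonneg (D *ᵥ u)
    nlinarith [dotSelf_nonneg v]
  have ht0 : 0 ≤ t := le_trans (mul_nonneg hc.le (dotSelf_nonneg v)) ht1
  -- t = g ⬝ᵥ v
  have htg : t = g ⬝ᵥ v := by
    rw [ht, hd, Matrix.mulVec_transpose, ← Matrix.dotProduct_mulVec]
  -- Cauchy-Schwarz : t^2 ≤ ‖g‖^2 * (v ⬝ᵥ v)
  have hnorm : ‖g‖ ^ 2 = (fun i => g i) ⬝ᵥ (fun i => g i) := by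
    rw [EuclideanSpace.norm_eq, Real.sq_sqrt (by positivity)]
    simp [dotProduct, sq]
  have hCS : t ^ 2 ≤ ‖g‖ ^ 2 * (v ⬝ᵥ v) := by
    rw [htg, hnorm]
    have := Finset.sum_mul_sq_le_sq_mul_sq Finset.univ (fun i => g i) (fun i => v i)
    simpa [dotProduct, sq] using this
  -- conclude
  have hvt : v ⬝ᵥ v ≤ (n / ν) * t := by
    have h2 : ((n:ℝ) / ν) * ((ν / n) * (v ⬝ᵥ v)) ≤ ((n:ℝ) / ν) * t :=
      mul_le_mul_of_nonneg_left ht1 (by positivity)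
    have h3 : ((n:ℝ) / ν) * ((ν / n) * (v ⬝ᵥ v)) = v ⬝ᵥ v := by
      field_simp
    linarith
  rcases eq_or_lt_of_le ht0 with h0 | h0
  · rw [← h0]
    positivity
  · have : t ^ 2 ≤ ‖g‖ ^ 2 * ((n / ν) * t) := by
      calc t ^ 2 ≤ ‖g‖ ^ 2 * (v ⬝ᵥ v) := hCS
        _ ≤ ‖g‖ ^ 2 * ((n / ν) * t) := by
            apply mul_le_mul_of_nonneg_left hvt (by positivity)
    have ht' : t ≤ ‖g‖ ^ 2 * (n / ν) := by
      nlinarith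
    calc t ≤ ‖g‖ ^ 2 * (n / ν) := ht'
      _ = n * ‖g‖ ^ 2 / ν := by ring
end
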